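/- Let w, v ∈ ℝ^d with all blocks vʲ nonzero under a fixed partition, and let D be the block diagonal matrix with j-th block (1/(2‖vʲ‖₂))·I. Then Σⱼ‖wʲ‖₂ - wᵀDw ≤ Σⱼ‖vʲ‖₂ - vᵀDv. -/

import Mathlib

open Matrix

/-- Euclidean norm of the `j`-th block of the vector `w`, where the blocks are the fibers
of the assignment map `g`. -/
noncomputable def vblockNorm {d m : ℕ} (g : Fin d → Fin m) (w : Fin d → ℝ) (j : Fin m) : ℝ :=
  Real.sqrt (∑ k ∈ Finset.univ.filter (fun k => g k = j), (w k) ^ 2)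

lemma dot_diag_block {d m : ℕ} (g : Fin d → Fin m) (w v : Fin d → ℝ) :
    w ⬝ᵥ (Matrix.diagonal (fun k => 1 / (2 * vblockNorm g v (g k)))) *ᵥ w
      = ∑ j : Fin m, (vblockNorm g w j) ^ 2 / (2 * vblockNorm g v j) := by
  have h1 : w ⬝ᵥ (Matrix.diagonal (fun k => 1 / (2 * vblockNorm g v (g k)))) *ᵥ w
      = ∑ k : Fin d, (w k) ^ 2 / (2 * vblockNorm g v (g k)) := by
    simp [dotProduct, Matrix.mulVec_diagonal]
    ring_nf
  rw [h1, ← Finset.sum_fiberwise Finset.univ g (fun k => (w k) ^ 2 / (2 * vblockNorm g v (g k)))]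
  apply Finset.sum_congr rfl
  intro j _
  rw [vblockNorm, Real.sq_sqrt (Finset.sum_nonneg fun k _ => sq_nonneg _), Finset.sum_div]
  apply Finset.sum_congr rfl
  intro k hk
  rw [Finset.mem_filter] at hk
  rw [hk.2]

/-- Let `w, v ∈ ℝ^d` with all blocks `vʲ` nonzero under a fixed partition (the fibers of
`g`), and let `D` be the block-diagonal matrix with `j`-th block `(1/(2‖vʲ‖₂))·I`. Then
`Σⱼ‖wʲ‖₂ - wᵀDw ≤ Σⱼ‖vʲ‖₂ - vᵀDv`. -/
theorem stmt_9 (d m : ℕ) (g : Fin d → Fin m) (w v : Fin d → ℝ)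
    (hv : ∀ j : Fin m, vblockNorm g v j ≠ 0)
    (D : Matrix (Fin d) (Fin d) ℝ)
    (hD : D = Matrix.diagonal (fun k => 1 / (2 * vblockNorm g v (g k)))) :
    (∑ j : Fin m, vblockNorm g w j) - w ⬝ᵥ D *ᵥ w ≤
      (∑ j : Fin m, vblockNorm g v j) - v ⬝ᵥ D *ᵥ v := by
  subst hD
  rw [dot_diag_block, dot_diag_block]
  rw [← Finset.sum_sub_distrib, ← Finset.sum_sub_distrib]
  apply Finset.sum_le_sum
  intro j _
  set a := vblockNorm g w j with ha
  set b := vblockNorm g v j with hb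
  have hb0 : 0 ≤ b := Real.sqrt_nonneg _
  have hbpos : 0 < b := lt_of_le_of_ne hb0 (Ne.symm (hv j))
  have hsq : b ^ 2 / (2 * b) = b / 2 := by field_simp
  rw [hsq]
  have h3 : (a - a ^ 2 / (2 * b)) * (2 * b) = 2 * a * b - a ^ 2 := by
    field_simp
  nlinarith [h3, hbpos, sq_nonneg (a - b)]
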